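/- Let V be an optimal prefix-free machine, T a computable real in (0,1], and F a prefix-free machine with infinite domain enumerated as p₀, p₁, p₂, …. Suppose d ∈ ℕ satisfies Z_V(T; i) ≥ 2^{−|p_i|/T − d} for all i, where Z_V(T; s) = ∑_{V(p)=s} 2^{−|p|/T}. If k is such that ∑_{i=0}^{k} Z_V(T; i) > Z_V(T) − 2^{−⌈n/T⌉ − d}, then every i > k satisfies |p_i| > n; consequently {p ∈ Dom F : |p| ≤ n} = {p_i : i ≤ k and |p_i| ≤ n}. -/
import Mathlib


open Filter

/-- A set of binary strings is prefix-free if no member is a proper prefix of another. -/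
def PrefixFreeSet (S : Set (List Bool)) : Prop :=
  ∀ p ∈ S, ∀ q ∈ S, p <+: q → p = q

/-- A prefix-free machine: a partial recursive function on binary strings
whose domain is prefix-free. -/
structure PrefixFreeMachine where
  F : List Bool →. List Bool
  partrec : Partrec F
  prefixFree : PrefixFreeSet F.Dom

/-- Optimality of a prefix-free machine. -/
def PrefixFreeMachine.Optimal (V : PrefixFreeMachine) : Prop :=
  ∀ F : PrefixFreeMachine, ∃ d : ℕ, ∀ p ∈ F.F.Dom,
    ∃ q ∈ V.F.Dom, V.F q = F.F p ∧ q.length ≤ p.length + d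

/-- The program-size complexity of `s` with respect to the machine `M`
(`⊤` if `s` is not in the range of `M`). -/
noncomputable def Hm (M : PrefixFreeMachine) (s : List Bool) : ℕ∞ :=
  sInf ((fun p : List Bool => (p.length : ℕ∞)) '' {p | s ∈ M.F p})

/-- The complexity, viewed in the extended reals. -/
noncomputable def HmE (M : PrefixFreeMachine) (s : List Bool) : EReal :=
  if h : Hm M s = ⊤ then ⊤ else (((Hm M s).untop h : ℕ) : EReal)

/-- The `i`-th bit (starting from `i = 0`) of the base-two expansion of the
fractional part of `α`, chosen with infinitely many zeros. -/
noncomputable def rbit (α : ℝ) (i : ℕ) : Bool :=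
  decide (⌊Int.fract α * 2 ^ (i + 1)⌋ % 2 = 1)

/-- The first `n` bits of the base-two expansion of `α - ⌊α⌋`. -/
noncomputable def restr (α : ℝ) (n : ℕ) : List Bool :=
  (List.range n).map (rbit α)

/-- A real is computable. -/
def ComputableReal (α : ℝ) : Prop :=
  ∃ a : ℕ → ℚ, Computable a ∧ ∀ n : ℕ, |α - (a n : ℝ)| < 2 ^ (-(n : ℤ))

/-- The canonical identification of natural numbers with binary strings:
`n` corresponds to the string `s` with `1s = n + 1` in binary. -/
def natToStr (n : ℕ) : List Bool := ((n + 1).bits).dropLast.reverse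

/-- The partition function `Z_V(T)`. -/
noncomputable def ZV (V : PrefixFreeMachine) (T : ℝ) : ℝ :=
  ∑' p : V.F.Dom, (2 : ℝ) ^ (-(((p : List Bool).length : ℝ)) / T)

/-- `Z_V(T; s)`: the mass of programs of `V` outputting `s`. -/
noncomputable def ZVs (V : PrefixFreeMachine) (T : ℝ) (s : List Bool) : ℝ :=
  ∑' p : {p : List Bool // s ∈ V.F p}, (2 : ℝ) ^ (-(((p : List Bool).length : ℝ)) / T)



section Aux

/-- `Nat.bits` is injective. -/
lemma bits_injective : Function.Injective Nat.bits := by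
  intro a
  induction a using Nat.strong_induction_on with
  | _ a IH =>
    intro b hab
    rcases Nat.eq_zero_or_pos a with ha | ha
    · subst ha
      rcases Nat.eq_zero_or_pos b with hb | hb
      · omega
      · exfalso
        have hb2 := Nat.div_add_mod b 2
        rcases Nat.mod_two_eq_zero_or_one b with h | h
        · have hbd : b / 2 ≠ 0 := by omega
          have : b = 2 * (b / 2) := by omega
          rw [this, Nat.bit0_bits _ hbd] at hab
          simp at hab
        · have : b = 2 * (b / 2) + 1 := by omega
          rw [this, Nat.bit1_bits] at hab
          simp at hab
    · rcases Nat.eq_zero_or_pos b with hb | hb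
      · exfalso
        subst hb
        rcases Nat.mod_two_eq_zero_or_one a with h | h
        · have had : a / 2 ≠ 0 := by omega
          have : a = 2 * (a / 2) := by omega
          rw [this, Nat.bit0_bits _ had] at hab
          simp at hab
        · have : a = 2 * (a / 2) + 1 := by omega
          rw [this, Nat.bit1_bits] at hab
          simp at hab
      · -- both positive
        have ha2 : a = 2 * (a / 2) + a % 2 := by omega
        have hb2 : b = 2 * (b / 2) + b % 2 := by omega
        rcases Nat.mod_two_eq_zero_or_one a with h | h <;>
          rcases Nat.mod_two_eq_zero_or_one b with h' | h'
        · have had : a / 2 ≠ 0 := by omega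
          have hbd : b / 2 ≠ 0 := by omega
          rw [show a = 2 * (a / 2) by omega, Nat.bit0_bits _ had,
            show b = 2 * (b / 2) by omega, Nat.bit0_bits _ hbd] at hab
          simp only [List.cons.injEq] at hab
          have := IH (a / 2) (by omega) hab.2
          omega
        · have had : a / 2 ≠ 0 := by omega
          rw [show a = 2 * (a / 2) by omega, Nat.bit0_bits _ had,
            show b = 2 * (b / 2) + 1 by omega, Nat.bit1_bits] at hab
          simp at hab
        · have hbd : b / 2 ≠ 0 := by omega
          rw [show a = 2 * (a / 2) + 1 by omega, Nat.bit1_bits,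
            show b = 2 * (b / 2) by omega, Nat.bit0_bits _ hbd] at hab
          simp at hab
        · rw [show a = 2 * (a / 2) + 1 by omega, Nat.bit1_bits,
            show b = 2 * (b / 2) + 1 by omega, Nat.bit1_bits] at hab
          simp only [List.cons.injEq] at hab
          have := IH (a / 2) (by omega) hab.2
          omega

/-- The bits of a positive number end with `true`. -/
lemma bits_concat_true : ∀ m : ℕ, m ≠ 0 → ∃ l, m.bits = l ++ [true] := by
  intro m
  induction m using Nat.strong_induction_on with
  | _ m IH =>
    intro hm
    rcases Nat.mod_two_eq_zero_or_one m with h | h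
    · have hmd : m / 2 ≠ 0 := by omega
      obtain ⟨l, hl⟩ := IH (m / 2) (by omega) hmd
      refine ⟨false :: l, ?_⟩
      rw [show m = 2 * (m / 2) by omega, Nat.bit0_bits _ hmd, hl]
      rfl
    · rcases Nat.eq_zero_or_pos (m / 2) with hmd | hmd
      · refine ⟨[], ?_⟩
        rw [show m = 1 by omega]
        simp
      · obtain ⟨l, hl⟩ := IH (m / 2) (by omega) (by omega)
        refine ⟨true :: l, ?_⟩
        rw [show m = 2 * (m / 2) + 1 by omega, Nat.bit1_bits, hl]
        rfl

end Aux

lemma natToStr_injective : Function.Injective natToStr := by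
  intro a b hab
  obtain ⟨la, hla⟩ := bits_concat_true (a + 1) (by omega)
  obtain ⟨lb, hlb⟩ := bits_concat_true (b + 1) (by omega)
  unfold natToStr at hab
  rw [hla, hlb, List.dropLast_concat, List.dropLast_concat] at hab
  have : la = lb := List.reverse_injective hab
  have : (a + 1).bits = (b + 1).bits := by rw [hla, hlb, this]
  have := bits_injective this
  omega

/-- All binary strings of length `m`, as a finset. -/
def allL (m : ℕ) : Finset (List Bool) :=
  (Finset.univ : Finset (Fin m → Bool)).image List.ofFn

lemma mem_allL {m : ℕ} {l : List Bool} : l ∈ allL m ↔ l.length = m := by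
  constructor
  · intro h
    obtain ⟨f, -, rfl⟩ := Finset.mem_image.mp h
    simp
  · rintro rfl
    exact Finset.mem_image.mpr ⟨l.get, Finset.mem_univ _, List.ofFn_get l⟩

lemma card_allL (m : ℕ) : (allL m).card = 2 ^ m := by
  rw [allL, Finset.card_image_of_injective _ List.ofFn_injective, Finset.card_univ]
  simp

/-- Finite Kraft inequality. -/
lemma kraft_finset (S : Set (List Bool))
    (hS : ∀ p ∈ S, ∀ q ∈ S, p <+: q → p = q)
    (u : Finset (List Bool)) (hu : ∀ q ∈ u, q ∈ S) :
    ∑ q ∈ u, ((2 : ℝ) ^ q.length)⁻¹ ≤ 1 := by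
  set N := u.sup List.length with hN
  have hlen : ∀ q ∈ u, q.length ≤ N := fun q hq => Finset.le_sup hq
  set ext : List Bool → Finset (List Bool) :=
    fun q => (allL (N - q.length)).image (q ++ ·) with hext
  have hcard : ∀ q ∈ u, (ext q).card = 2 ^ (N - q.length) := by
    intro q hq
    rw [hext, Finset.card_image_of_injective _ (fun a b h => by
      simpa using List.append_cancel_left h), card_allL]
  have hdisj : ∀ q₁ ∈ u, ∀ q₂ ∈ u, q₁ ≠ q₂ → Disjoint (ext q₁) (ext q₂) := by
    intro q₁ h₁ q₂ h₂ hne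
    rw [Finset.disjoint_left]
    intro x hx1 hx2
    obtain ⟨s₁, -, rfl⟩ := Finset.mem_image.mp hx1
    obtain ⟨s₂, -, he⟩ := Finset.mem_image.mp hx2
    have hp1 : q₁ <+: q₁ ++ s₁ := List.prefix_append _ _
    have hp2 : q₂ <+: q₁ ++ s₁ := he ▸ List.prefix_append _ _
    rcases List.prefix_or_prefix_of_prefix hp1 hp2 with h | h
    · exact hne (hS _ (hu _ h₁) _ (hu _ h₂) h)
    · exact hne (hS _ (hu _ h₂) _ (hu _ h₁) h).symm
  have hsub : u.biUnion ext ⊆ allL N := by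
    intro x hx
    obtain ⟨q, hq, hxq⟩ := Finset.mem_biUnion.mp hx
    obtain ⟨s, hs, rfl⟩ := Finset.mem_image.mp hxq
    rw [mem_allL]
    have := mem_allL.mp hs
    simp only [List.length_append, this]
    have := hlen q hq
    omega
  have key : ∑ q ∈ u, 2 ^ (N - q.length) ≤ 2 ^ N := by
    calc ∑ q ∈ u, 2 ^ (N - q.length) = ∑ q ∈ u, (ext q).card :=
          Finset.sum_congr rfl fun q hq => (hcard q hq).symm
      _ = (u.biUnion ext).card := (Finset.card_biUnion hdisj).symm
      _ ≤ (allL N).card := Finset.card_le_card hsub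
      _ = 2 ^ N := card_allL N
  have h2N : (0 : ℝ) < 2 ^ N := by positivity
  have step : ∀ q ∈ u, ((2 : ℝ) ^ q.length)⁻¹ = (2 : ℝ) ^ (N - q.length) / 2 ^ N := by
    intro q hq
    rw [eq_div_iff (ne_of_gt h2N), inv_mul_eq_div, div_eq_iff (by positivity), ← pow_add]
    congr 1
    have := hlen q hq
    omega
  rw [Finset.sum_congr rfl step, ← Finset.sum_div]
  rw [div_le_one h2N]
  calc ∑ q ∈ u, (2 : ℝ) ^ (N - q.length)
      = ((∑ q ∈ u, 2 ^ (N - q.length) : ℕ) : ℝ) := by push_cast; ring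
    _ ≤ ((2 ^ N : ℕ) : ℝ) := by exact_mod_cast key
    _ = 2 ^ N := by push_cast; ring

section Summ

variable {T : ℝ}

lemma term_le (hT0 : 0 < T) (hT1 : T ≤ 1) (q : List Bool) :
    (2 : ℝ) ^ (-(q.length : ℝ) / T) ≤ ((2 : ℝ) ^ q.length)⁻¹ := by
  have h1 : (2 : ℝ) ^ (-(q.length : ℝ) / T) ≤ (2 : ℝ) ^ (-(q.length : ℝ)) := by
    apply Real.rpow_le_rpow_of_exponent_le one_le_two
    rw [div_le_iff₀ hT0]
    have : (q.length : ℝ) * T ≤ (q.length : ℝ) * 1 := by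
      apply mul_le_mul_of_nonneg_left hT1 (by positivity)
    nlinarith [this]
  have h2 : (2 : ℝ) ^ (-(q.length : ℝ)) = ((2 : ℝ) ^ q.length)⁻¹ := by
    rw [Real.rpow_neg (by norm_num), Real.rpow_natCast]
  linarith [h1, h2.le, h2.ge]

lemma summable_kraft (S : Set (List Bool)) (hS : PrefixFreeSet S)
    (hT0 : 0 < T) (hT1 : T ≤ 1) :
    Summable (fun q : S => (2 : ℝ) ^ (-((q : List Bool).length : ℝ) / T)) := by
  have hbig : Summable (fun q : S => ((2 : ℝ) ^ (q : List Bool).length)⁻¹) := by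
    apply summable_of_sum_le (c := 1)
    · intro q; positivity
    · intro v
      calc ∑ x ∈ v, ((2 : ℝ) ^ (x : List Bool).length)⁻¹
          = ∑ q ∈ v.image Subtype.val, ((2 : ℝ) ^ q.length)⁻¹ :=
            (Finset.sum_image (f := fun q : List Bool => ((2 : ℝ) ^ q.length)⁻¹)
              (g := (Subtype.val : {x // x ∈ S} → List Bool)) (s := v)
              (fun a _ b _ h => Subtype.ext h)).symm
        _ ≤ 1 := kraft_finset S hS _ (fun q hq => by
            obtain ⟨a, -, rfl⟩ := Finset.mem_image.mp hq; exact a.2)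
  exact hbig.of_nonneg_of_le (fun q => by positivity) (fun q => term_le hT0 hT1 _)

end Summ

theorem halting_aux (V : PrefixFreeMachine)
    (T : ℝ) (hT0 : 0 < T) (hT1 : T ≤ 1)
    (F : PrefixFreeMachine)
    (p : ℕ → List Bool) (hp : Function.Injective p) (hprange : Set.range p = F.F.Dom)
    (d : ℕ) (hd : ∀ i : ℕ, (2 : ℝ) ^ (-((p i).length : ℝ) / T - d) ≤ ZVs V T (natToStr i))
    (n k : ℕ)
    (hk : ZV V T - (2 : ℝ) ^ (-(⌈(n : ℝ) / T⌉) - (d : ℤ)) <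
      ∑ i ∈ Finset.range (k + 1), ZVs V T (natToStr i)) :
    (∀ i : ℕ, k < i → n < (p i).length) ∧
      {q : List Bool | q ∈ F.F.Dom ∧ q.length ≤ n} =
        {q : List Bool | ∃ i ≤ k, q = p i ∧ q.length ≤ n} := by
  set g₀ : List Bool → ℝ := fun q => (2 : ℝ) ^ (-(q.length : ℝ) / T) with hg₀
  have hg0 : ∀ q, 0 ≤ g₀ q := fun q => (Real.rpow_pos_of_pos two_pos _).le
  set Ps : ℕ → Set (List Bool) := fun i => {q | natToStr i ∈ V.F q} with hPs
  have hPsDom : ∀ i, Ps i ⊆ V.F.Dom := fun i q hq => (PFun.mem_dom V.F q).mpr ⟨natToStr i, hq⟩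
  have hsum : Summable (fun q : V.F.Dom => g₀ q) :=
    summable_kraft V.F.Dom V.prefixFree hT0 hT1
  have hind : Summable (V.F.Dom.indicator g₀) :=
    summable_subtype_iff_indicator.mp hsum
  have hindPs : ∀ i, (Ps i).indicator g₀ = (Ps i).indicator (V.F.Dom.indicator g₀) := by
    intro i
    funext q
    by_cases hq : q ∈ Ps i
    · rw [Set.indicator_of_mem hq, Set.indicator_of_mem hq,
        Set.indicator_of_mem (hPsDom i hq)]
    · rw [Set.indicator_of_notMem hq, Set.indicator_of_notMem hq]
  have hsumPs : ∀ i, Summable ((Ps i).indicator g₀) := by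
    intro i
    rw [hindPs i]
    exact hind.indicator _
  have hZVs : ∀ i, ZVs V T (natToStr i) = ∑' q, (Ps i).indicator g₀ q := by
    intro i
    exact tsum_subtype (Ps i) g₀
  have hZV : ZV V T = ∑' q, V.F.Dom.indicator g₀ q := tsum_subtype _ g₀
  -- pairwise disjoint
  have hPsdisj : ∀ i j : ℕ, i ≠ j → ∀ q, q ∈ Ps i → q ∉ Ps j := by
    intro i j hij q hi hj
    exact hij (natToStr_injective (Part.mem_unique hi hj))
  -- key partial sum bound
  have hkey : ∀ t : Finset ℕ, ∑ i ∈ t, ZVs V T (natToStr i) ≤ ZV V T := by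
    intro t
    rw [hZV]
    calc ∑ i ∈ t, ZVs V T (natToStr i)
        = ∑ i ∈ t, ∑' q, (Ps i).indicator g₀ q := by
          exact Finset.sum_congr rfl fun i _ => hZVs i
      _ = ∑' q, ∑ i ∈ t, (Ps i).indicator g₀ q :=
          (Summable.tsum_finsetSum fun i _ => hsumPs i).symm
      _ ≤ ∑' q, V.F.Dom.indicator g₀ q := by
          apply Summable.tsum_le_tsum _ (summable_sum fun i _ => hsumPs i) hind
          intro q
          by_cases hq : ∃ i ∈ t, q ∈ Ps i
          · obtain ⟨i₀, hi₀t, hi₀⟩ := hq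
            have heq : ∑ i ∈ t, (Ps i).indicator g₀ q = g₀ q := by
              rw [Finset.sum_eq_single_of_mem i₀ hi₀t
                (fun j hjt hji => Set.indicator_of_notMem
                  (hPsdisj i₀ j (Ne.symm hji) q hi₀) _)]
              exact Set.indicator_of_mem hi₀ _
            rw [heq, Set.indicator_of_mem (hPsDom i₀ hi₀)]
          · push_neg at hq
            rw [Finset.sum_eq_zero fun i hit => Set.indicator_of_notMem (hq i hit) _]
            exact Set.indicator_nonneg (fun q _ => hg0 q) q
  have main : ∀ i : ℕ, k < i → n < (p i).length := by
    intro i hi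
    have hnotmem : i ∉ Finset.range (k + 1) := by simp; omega
    have h1 : ZVs V T (natToStr i) + ∑ j ∈ Finset.range (k + 1), ZVs V T (natToStr j)
        ≤ ZV V T := by
      have := hkey (insert i (Finset.range (k + 1)))
      rwa [Finset.sum_insert hnotmem] at this
    have h2 : ZVs V T (natToStr i) < (2 : ℝ) ^ (-(⌈(n : ℝ) / T⌉) - (d : ℤ)) := by
      linarith
    have h3 : (2 : ℝ) ^ (-((p i).length : ℝ) / T - d)
        < (2 : ℝ) ^ (((-(⌈(n : ℝ) / T⌉) - (d : ℤ) : ℤ) : ℝ)) := by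
      rw [Real.rpow_intCast]
      exact lt_of_le_of_lt (hd i) h2
    have h4 : -((p i).length : ℝ) / T - d < ((-(⌈(n : ℝ) / T⌉) - (d : ℤ) : ℤ) : ℝ) :=
      (Real.rpow_lt_rpow_left_iff one_lt_two).mp h3
    have h5 : ((-(⌈(n : ℝ) / T⌉) - (d : ℤ) : ℤ) : ℝ) = -((⌈(n : ℝ) / T⌉ : ℝ)) - d := by
      push_cast; ring
    rw [h5] at h4
    have h6 : (n : ℝ) / T ≤ (⌈(n : ℝ) / T⌉ : ℝ) := Int.le_ceil _
    have h7 : (n : ℝ) / T < ((p i).length : ℝ) / T := by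
      have : -((p i).length : ℝ) / T < -((n : ℝ) / T) := by linarith
      have := neg_lt_neg this
      rw [neg_neg] at this
      calc (n : ℝ) / T < -(-((p i).length : ℝ) / T) := this
        _ = ((p i).length : ℝ) / T := by ring
    have h8 : (n : ℝ) < ((p i).length : ℝ) :=
      (div_lt_div_iff_of_pos_right hT0).mp h7
    exact_mod_cast h8
  refine ⟨main, ?_⟩
  ext q
  simp only [Set.mem_setOf_eq]
  constructor
  · rintro ⟨hqdom, hqn⟩
    rw [← hprange] at hqdom
    obtain ⟨i, rfl⟩ := hqdom
    refine ⟨i, ?_, rfl, hqn⟩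
    by_contra hik
    exact absurd hqn (by have := main i (by omega); omega)
  · rintro ⟨i, hik, rfl, hlen⟩
    exact ⟨hprange ▸ Set.mem_range_self i, hlen⟩


theorem halting_from_ZV (V : PrefixFreeMachine) (hV : V.Optimal)
    (T : ℝ) (hT : ComputableReal T) (hT0 : 0 < T) (hT1 : T ≤ 1)
    (F : PrefixFreeMachine) (hFinf : F.F.Dom.Infinite)
    (p : ℕ → List Bool) (hp : Function.Injective p) (hprange : Set.range p = F.F.Dom)
    (d : ℕ) (hd : ∀ i : ℕ, (2 : ℝ) ^ (-((p i).length : ℝ) / T - d) ≤ ZVs V T (natToStr i))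
    (n k : ℕ)
    (hk : ZV V T - (2 : ℝ) ^ (-(⌈(n : ℝ) / T⌉) - (d : ℤ)) <
      ∑ i ∈ Finset.range (k + 1), ZVs V T (natToStr i)) :
    (∀ i : ℕ, k < i → n < (p i).length) ∧
      {q : List Bool | q ∈ F.F.Dom ∧ q.length ≤ n} =
        {q : List Bool | ∃ i ≤ k, q = p i ∧ q.length ≤ n} := by
  exact halting_aux V T hT0 hT1 F p hp hprange d hd n k hk
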